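/- Let M be a symmetric negative definite real r×r matrix with nonnegative off-diagonal entries, and let x, y ∈ ℝ^r with y_i ≥ 0 for all i. If (M(y − x))_j ≤ 0 for every j, then y_i − x_i ≥ 0 for every i. (Divisor form: if E is effective, the intersection matrix of the components is negative definite, and (E − D)·C_j ≤ 0 for all components C_j, then E − D ≥ 0.) -/

import Mathlib

/-- If M is symmetric negative definite with nonnegative off-diagonal entries,
y has nonnegative entries, and (M(y − x))_j ≤ 0 for all j, then x_i ≤ y_i for all i. -/
theorem stmt6 (r : ℕ) (M : Matrix (Fin r) (Fin r) ℝ)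
    (hsym : M.IsSymm)
    (hneg : ∀ v : Fin r → ℝ, v ≠ 0 → dotProduct v (M.mulVec v) < 0)
    (hoff : ∀ i j, i ≠ j → 0 ≤ M i j)
    (x y : Fin r → ℝ) (hy : ∀ i, 0 ≤ y i)
    (h : ∀ j, M.mulVec (y - x) j ≤ 0) :
    ∀ i, x i ≤ y i := by
  set z : Fin r → ℝ := y - x with hz
  suffices hzn : ∀ i, 0 ≤ z i by
    intro i
    have := hzn i
    simp [hz] at this
    linarith
  by_contra hc
  push_neg at hc
  obtain ⟨i0, hi0⟩ := hc
  set n : Fin r → ℝ := fun i => max (-(z i)) 0 with hn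
  set p : Fin r → ℝ := fun i => max (z i) 0 with hp
  have hn0 : ∀ i, 0 ≤ n i := fun i => le_max_right _ _
  have hp0 : ∀ i, 0 ≤ p i := fun i => le_max_right _ _
  have hnp : ∀ i, n i * p i = 0 := by
    intro i
    rcases le_total (z i) 0 with hle | hle
    · have : p i = 0 := max_eq_right hle
      rw [this, mul_zero]
    · have : n i = 0 := max_eq_right (neg_nonpos.mpr hle)
      rw [this, zero_mul]
  have hpn : ∀ i, n i = p i - z i := by
    intro i
    rcases le_total (z i) 0 with hle | hle
    · rw [show n i = -(z i) from max_eq_left (by linarith),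
        show p i = 0 from max_eq_right hle]
      ring
    · rw [show n i = (0:ℝ) from max_eq_right (by linarith),
        show p i = z i from max_eq_left hle]
      ring
  have hne : n ≠ 0 := by
    intro hcon
    have : n i0 = 0 := congrFun hcon i0
    have : max (-(z i0)) 0 = 0 := this
    have h1 : -(z i0) ≤ 0 := by
      by_contra hh
      push_neg at hh
      rw [max_eq_left hh.le] at this
      linarith
    linarith
  have hneq : (n : Fin r → ℝ) = p - z := funext hpn
  have key1 : dotProduct n (M.mulVec z) ≤ 0 := by
    apply Finset.sum_nonpos
    intro j _
    exact mul_nonpos_of_nonneg_of_nonpos (hn0 j) (h j)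
  have key2 : 0 ≤ dotProduct n (M.mulVec p) := by
    unfold dotProduct Matrix.mulVec dotProduct
    apply Finset.sum_nonneg
    intro i _
    rw [Finset.mul_sum]
    apply Finset.sum_nonneg
    intro j _
    rcases eq_or_ne i j with rfl | hij
    · have : n i * (M i i * p i) = M i i * (n i * p i) := by ring
      rw [this, hnp i, mul_zero]
    · exact mul_nonneg (hn0 i) (mul_nonneg (hoff i j hij) (hp0 j))
  have hfinal : 0 ≤ dotProduct n (M.mulVec n) := by
    rw [hneq, Matrix.mulVec_sub, dotProduct_sub]
    rw [← hneq]
    linarith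
  exact absurd hfinal (not_le.mpr (hneg n hne))
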